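/- Let A be a brace of cardinality p^n with p > n + 1 prime, and suppose y, y' ∈ A satisfy p²(y − y') = 0. Then for every x ∈ A, p((px) * y) = p((px) * y'). -/

import Mathlib

/-- A left brace: an abelian group `(A,+)` together with a group operation `circ`
(whose identity is `0`) satisfying `a ∘ (b + c) + a = a ∘ b + a ∘ c`. -/
structure LeftBrace (A : Type*) [AddCommGroup A] where
  circ : A → A → A
  inv : A → A
  circ_assoc : ∀ a b c, circ (circ a b) c = circ a (circ b c)
  circ_zero : ∀ a, circ a 0 = a
  zero_circ : ∀ a, circ 0 a = a
  inv_circ : ∀ a, circ (inv a) a = 0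
  compat : ∀ a b c, circ a (b + c) + a = circ a b + circ a c

namespace LeftBrace

variable {A : Type*} [AddCommGroup A]

/-- The star operation `a * b = a ∘ b - a - b`. -/
def star (B : LeftBrace A) (a b : A) : A := B.circ a b - a - b

/-- `circPow B a n` is the product `a ∘ a ∘ ⋯ ∘ a` of `n` copies of `a`. -/
def circPow (B : LeftBrace A) (a : A) : ℕ → A
  | 0 => 0
  | n + 1 => B.circ a (B.circPow a n)

/-- The multiplicative group `(A, ∘)` as a type synonym. -/
@[reducible] def Grp (_B : LeftBrace A) : Type _ := A

instance (B : LeftBrace A) : Group (B.Grp) where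
  mul := B.circ
  one := (0 : A)
  inv := B.inv
  mul_assoc := B.circ_assoc
  one_mul := B.zero_circ
  mul_one := B.circ_zero
  inv_mul_cancel := B.inv_circ

lemma circ_inv (B : LeftBrace A) (a : A) : B.circ a (B.inv a) = 0 :=
  mul_inv_cancel (G := B.Grp) a

/-- The map `λ_a : b ↦ a ∘ b - a`, as an additive endomorphism. -/
def lam (B : LeftBrace A) (a : A) : AddMonoid.End A where
  toFun b := B.circ a b - a
  map_zero' := by simp [B.circ_zero]
  map_add' b c := by
    show B.circ a (b + c) - a = (B.circ a b - a) + (B.circ a c - a)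
    have h : B.circ a (b + c) = B.circ a b + B.circ a c - a :=
      eq_sub_iff_add_eq.mpr (B.compat a b c)
    rw [h]; abel

lemma lam_apply (B : LeftBrace A) (a b : A) : B.lam a b = B.circ a b - a := rfl

lemma circ_eq (B : LeftBrace A) (a b : A) : B.circ a b = B.lam a b + a := by
  rw [lam_apply]; abel

lemma lam_mul (B : LeftBrace A) (a b : A) :
    B.lam (B.circ a b) = B.lam a * B.lam b := by
  refine AddMonoidHom.ext fun c => ?_
  show B.circ (B.circ a b) c - B.circ a b = B.lam a (B.lam b c)
  have h : B.lam a (B.lam b c) = B.lam a (B.circ b c) - B.lam a b := by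
    rw [← map_sub]; rfl
  rw [h, lam_apply, lam_apply, B.circ_assoc]
  abel

lemma lam_zero (B : LeftBrace A) : B.lam 0 = 1 := by
  refine AddMonoidHom.ext fun c => ?_
  show B.circ 0 c - 0 = c
  rw [B.zero_circ, sub_zero]

lemma lam_lam_inv (B : LeftBrace A) (a : A) (m : A) :
    B.lam a (B.lam (B.inv a) m) = m := by
  have h : B.lam a * B.lam (B.inv a) = 1 := by
    rw [← lam_mul, B.circ_inv, lam_zero]
  calc B.lam a (B.lam (B.inv a) m) = (B.lam a * B.lam (B.inv a)) m := rfl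
    _ = m := by rw [h]; rfl

/-- The ascending series: `soc 0 = ⊥`, and `soc (k+1)` consists of those `m` with
`λ_a m - m ∈ soc k` for all `a`. -/
def soc (B : LeftBrace A) : ℕ → AddSubgroup A
  | 0 => ⊥
  | k + 1 =>
    { carrier := { m | ∀ a, B.lam a m - m ∈ B.soc k }
      zero_mem' := fun a => by simpa using zero_mem (B.soc k)
      add_mem' := by
        intro x y hx hy a
        have h : B.lam a (x + y) - (x + y) = (B.lam a x - x) + (B.lam a y - y) := by
          rw [map_add]; abel
        rw [h]; exact add_mem (hx a) (hy a)
      neg_mem' := by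
        intro x hx a
        have h : B.lam a (-x) - (-x) = -(B.lam a x - x) := by rw [map_neg]; abel
        rw [h]; exact neg_mem (hx a) }

lemma mem_soc_succ (B : LeftBrace A) {k : ℕ} {m : A} :
    m ∈ B.soc (k + 1) ↔ ∀ a, B.lam a m - m ∈ B.soc k := Iff.rfl

lemma soc_zero (B : LeftBrace A) : B.soc 0 = ⊥ := rfl

lemma soc_le_succ (B : LeftBrace A) : ∀ k, B.soc k ≤ B.soc (k + 1) := by
  intro k
  induction k with
  | zero => exact bot_le
  | succ k ih => exact fun m hm a => ih (hm a)

lemma soc_mono (B : LeftBrace A) {k l : ℕ} (h : k ≤ l) : B.soc k ≤ B.soc l := by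
  induction h with
  | refl => exact le_rfl
  | step _ ih => exact le_trans ih (B.soc_le_succ _)

lemma lam_mem_soc (B : LeftBrace A) {k : ℕ} {m : A} (a : A) (hm : m ∈ B.soc k) :
    B.lam a m ∈ B.soc k := by
  induction k generalizing m a with
  | zero =>
    rw [soc_zero, AddSubgroup.mem_bot] at *
    rw [hm, map_zero]
  | succ k ih =>
    intro b
    obtain ⟨c, hcirc⟩ : ∃ c, B.circ a c = B.circ b a :=
      ⟨B.circ (B.inv a) (B.circ b a), mul_inv_cancel_left (G := B.Grp) a (B.circ b a)⟩
    have key : B.lam b (B.lam a m) - B.lam a m = B.lam a (B.lam c m - m) := by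
      have h1 : B.lam a (B.lam c m) = B.lam (B.circ a c) m := by rw [lam_mul]; rfl
      have h2 : B.lam b (B.lam a m) = B.lam (B.circ b a) m := by rw [lam_mul]; rfl
      rw [map_sub, h1, h2, hcirc]
    rw [key]
    exact ih a (hm c)

/-- Action of the circle group on the quotient by a socle term. -/
instance socAction (B : LeftBrace A) (k : ℕ) : MulAction B.Grp (A ⧸ B.soc k) where
  smul a := QuotientAddGroup.map (B.soc k) (B.soc k) (B.lam a)
    (fun m hm => B.lam_mem_soc a hm)
  one_smul q := by
    refine QuotientAddGroup.induction_on q (fun m => ?_)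
    show QuotientAddGroup.map (B.soc k) (B.soc k) (B.lam 0) _ (QuotientAddGroup.mk m)
      = QuotientAddGroup.mk m
    change (QuotientAddGroup.mk (B.lam 0 m) : A ⧸ B.soc k) = _
    rw [lam_zero]
    rfl
  mul_smul a b q := by
    refine QuotientAddGroup.induction_on q (fun m => ?_)
    show QuotientAddGroup.map (B.soc k) (B.soc k) (B.lam (B.circ a b)) _
        (QuotientAddGroup.mk m)
      = QuotientAddGroup.map (B.soc k) (B.soc k) (B.lam a) _
          (QuotientAddGroup.map (B.soc k) (B.soc k) (B.lam b) _ (QuotientAddGroup.mk m))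
    change (QuotientAddGroup.mk (B.lam (B.circ a b) m) : A ⧸ B.soc k)
      = QuotientAddGroup.mk (B.lam a (B.lam b m))
    rw [lam_mul]
    rfl

lemma smul_mk (B : LeftBrace A) (k : ℕ) (a m : A) :
    (a : B.Grp) • (QuotientAddGroup.mk m : A ⧸ B.soc k)
      = QuotientAddGroup.mk (B.lam a m) := by
  show QuotientAddGroup.map (B.soc k) (B.soc k) (B.lam a) _ (QuotientAddGroup.mk m)
    = QuotientAddGroup.mk (B.lam a m)
  rfl

lemma exists_mem_succ_not_mem (B : LeftBrace A) [Finite A] {p n : ℕ} (hp : p.Prime)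
    (hcard : Nat.card A = p ^ n) {k : ℕ} (hk : B.soc k ≠ ⊤) :
    ∃ m, m ∈ B.soc (k + 1) ∧ m ∉ B.soc k := by
  haveI : Fact p.Prime := ⟨hp⟩
  have hpg : IsPGroup p B.Grp := IsPGroup.of_card (n := n) hcard
  set N := B.soc k with hN
  set Q := A ⧸ N with hQ
  have hmul : Nat.card Q * Nat.card N = p ^ n := by
    rw [← hcard]; exact (AddSubgroup.card_eq_card_quotient_mul_card_addSubgroup N).symm
  have hdvdQ : Nat.card Q ∣ p ^ n := ⟨Nat.card N, hmul.symm⟩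
  obtain ⟨c, hc, hcQ⟩ := (Nat.dvd_prime_pow hp).1 hdvdQ
  have hQne1 : Nat.card Q ≠ 1 := by
    intro h1
    apply hk
    rw [eq_top_iff]
    intro x _
    haveI : Subsingleton Q := (Nat.card_eq_one_iff_unique.1 h1).1
    have : (QuotientAddGroup.mk x : Q) = QuotientAddGroup.mk 0 := Subsingleton.elim _ _
    rw [QuotientAddGroup.eq_iff_sub_mem, sub_zero] at this
    exact this
  have hcne : c ≠ 0 := by
    rintro rfl; exact hQne1 (by rw [hcQ, pow_zero])
  have hpQ : p ∣ Nat.card Q := by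
    rw [hcQ]; exact dvd_pow_self p hcne
  have hmod := hpg.card_modEq_card_fixedPoints Q
  have hpfix : p ∣ Nat.card (MulAction.fixedPoints B.Grp Q) :=
    (Nat.modEq_zero_iff_dvd).1 ((hmod.symm.trans (Nat.modEq_zero_iff_dvd.2 hpQ)))
  have hfix0 : (0 : Q) ∈ MulAction.fixedPoints B.Grp Q := by
    intro g
    show QuotientAddGroup.map (B.soc k) (B.soc k) (B.lam g) _ (0 : Q) = (0 : Q)
    exact map_zero _
  have hpos : 0 < Nat.card (MulAction.fixedPoints B.Grp Q) := by
    have : Nonempty (MulAction.fixedPoints B.Grp Q) := ⟨⟨0, hfix0⟩⟩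
    exact Nat.card_pos
  have hlt : 1 < Nat.card (MulAction.fixedPoints B.Grp Q) :=
    lt_of_lt_of_le hp.one_lt (Nat.le_of_dvd hpos hpfix)
  haveI : Nontrivial (MulAction.fixedPoints B.Grp Q) :=
    Finite.one_lt_card_iff_nontrivial.1 hlt
  obtain ⟨q', hq'⟩ := exists_ne (⟨0, hfix0⟩ : MulAction.fixedPoints B.Grp Q)
  have hq0 : (q' : Q) ≠ 0 := fun h => hq' (Subtype.ext h)
  obtain ⟨m, hm⟩ := QuotientAddGroup.mk_surjective (q' : Q)
  refine ⟨m, ?_, ?_⟩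
  · intro a
    have := q'.2 (a : B.Grp)
    rw [← hm, B.smul_mk, QuotientAddGroup.eq_iff_sub_mem] at this
    exact this
  · intro hmem
    apply hq0
    rw [← hm]
    rw [show (0 : Q) = QuotientAddGroup.mk 0 from rfl, QuotientAddGroup.eq_iff_sub_mem,
      sub_zero]
    exact hmem

lemma soc_top (B : LeftBrace A) [Finite A] {p n : ℕ} (hp : p.Prime)
    (hcard : Nat.card A = p ^ n) : B.soc n = ⊤ := by
  have claim : ∀ k, B.soc k = ⊤ ∨ p ^ k ∣ Nat.card (B.soc k) := by
    intro k
    induction k with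
    | zero =>
      right
      rw [soc_zero, AddSubgroup.card_bot, pow_zero]
    | succ k ih =>
      by_cases htop : B.soc k = ⊤
      · left
        exact top_le_iff.1 (htop ▸ B.soc_le_succ k)
      · right
        rcases ih with h | hdvd
        · exact absurd h htop
        obtain ⟨m, hm1, hm2⟩ := B.exists_mem_succ_not_mem hp hcard htop
        have hle : B.soc k ≤ B.soc (k + 1) := B.soc_le_succ k
        have hdvd2 : Nat.card (B.soc k) ∣ Nat.card (B.soc (k + 1)) :=
          AddSubgroup.card_dvd_of_le hle
        have hdvdA : Nat.card (B.soc (k + 1)) ∣ p ^ n := by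
          rw [← hcard]; exact AddSubgroup.card_addSubgroup_dvd_card _
        obtain ⟨b, hb, hcb⟩ := (Nat.dvd_prime_pow hp).1 hdvdA
        have hdvdk : p ^ k ∣ p ^ b := hcb ▸ dvd_trans hdvd hdvd2
        have hkb : k ≤ b := (Nat.pow_dvd_pow_iff_le_right hp.one_lt).1 hdvdk
        have hne : Nat.card (B.soc k) ≠ Nat.card (B.soc (k + 1)) := by
          intro heq
          have hsets : ((B.soc k : Set A)) = (B.soc (k + 1) : Set A) := by
            refine Set.eq_of_subset_of_ncard_le hle ?_ (Set.toFinite _)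
            rw [← Nat.card_coe_set_eq, ← Nat.card_coe_set_eq]
            exact le_of_eq heq.symm
          have : B.soc k = B.soc (k + 1) := SetLike.ext' hsets
          exact hm2 (this ▸ hm1)
        have hbk : k + 1 ≤ b := by
          rcases Nat.lt_or_ge k b with h | h
          · omega
          · exfalso
            have : k = b := le_antisymm hkb h
            subst this
            apply hne
            have h1 : Nat.card (B.soc (k+1)) = p ^ k := hcb
            have h2 : p ^ k ∣ Nat.card (B.soc k) := hdvd
            have h3 : Nat.card (B.soc k) ∣ p ^ k := h1 ▸ hdvd2
            rw [Nat.dvd_antisymm h3 h2, h1]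
        rw [hcb]
        exact pow_dvd_pow p hbk
  rcases claim n with h | h
  · exact h
  · have hdvdA : Nat.card (B.soc n) ∣ p ^ n := by
      rw [← hcard]; exact AddSubgroup.card_addSubgroup_dvd_card _
    have : Nat.card (B.soc n) = p ^ n := Nat.dvd_antisymm hdvdA h
    exact AddSubgroup.eq_top_of_card_eq _ (by rw [this, hcard])

lemma nu_apply (B : LeftBrace A) (a m : A) : (B.lam a - 1) m = B.lam a m - m := rfl

lemma nu_pow_mem (B : LeftBrace A) (a : A) :
    ∀ (i k : ℕ) (m : A), m ∈ B.soc k → ((B.lam a - 1) ^ i) m ∈ B.soc (k - i) := by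
  intro i
  induction i with
  | zero => intro k m hm; simpa using hm
  | succ i ih =>
    intro k m hm
    have h1 : ((B.lam a - 1) ^ (i + 1)) m = ((B.lam a - 1) ^ i) ((B.lam a - 1) m) := by
      rw [pow_succ]; rfl
    rw [h1]
    cases k with
    | zero =>
      have hm0 : m = 0 := by simpa [soc_zero] using hm
      subst hm0
      simp only [map_zero]
      exact zero_mem _
    | succ k =>
      have h2 : (B.lam a - 1) m ∈ B.soc k := hm a
      have h3 := ih k _ h2
      simpa [Nat.succ_sub_succ] using h3

lemma nu_pow_eq_zero (B : LeftBrace A) {n : ℕ} (htop : B.soc n = ⊤) (a m : A)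
    {i : ℕ} (hi : n ≤ i) : ((B.lam a - 1) ^ i) m = 0 := by
  have hm : m ∈ B.soc n := htop ▸ AddSubgroup.mem_top m
  have h := B.nu_pow_mem a i n m hm
  rw [Nat.sub_eq_zero_of_le hi, soc_zero, AddSubgroup.mem_bot] at h
  exact h

end LeftBrace

section RingLemma

/-- Geometric sum expressed with binomial coefficients: in any ring,
`∑_{j<m} (ν+1)^j = ∑_{i<P} C(m, i+1) ν^i` whenever `m ≤ P`. -/
lemma geom_sum_choose {R : Type*} [Ring R] (ν : R) (P : ℕ) :
    ∀ m, m ≤ P → ∑ j ∈ Finset.range m, (ν + 1) ^ j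
      = ∑ i ∈ Finset.range P, (m.choose (i + 1) : R) * ν ^ i := by
  intro m
  induction m with
  | zero => intro _; simp
  | succ m ih =>
    intro hm
    rw [Finset.sum_range_succ, ih (le_trans (Nat.le_succ m) hm)]
    have hexp : (ν + 1) ^ m = ∑ i ∈ Finset.range P, (m.choose i : R) * ν ^ i := by
      rw [Commute.add_pow (Commute.one_right ν)]
      have hsub : Finset.range (m + 1) ⊆ Finset.range P := Finset.range_subset_range.2 hm
      rw [← Finset.sum_subset hsub]
      · apply Finset.sum_congr rfl
        intro i _
        rw [one_pow, mul_one, (Nat.cast_commute (m.choose i) (ν ^ i)).eq]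
      · intro i _ hi
        rw [Finset.mem_range, not_lt] at hi
        simp [Nat.choose_eq_zero_of_lt (show m < i by omega)]
    rw [hexp, ← Finset.sum_add_distrib]
    apply Finset.sum_congr rfl
    intro i _
    rw [Nat.choose_succ_succ (m) (i), Nat.cast_add, add_mul]
    abel

end RingLemma

namespace LeftBrace

variable {A : Type*} [AddCommGroup A]

lemma end_sum_apply (s : Finset ℕ) (f : ℕ → AddMonoid.End A) (m : A) :
    (∑ i ∈ s, f i) m = ∑ i ∈ s, (f i) m := by
  classical
  induction s using Finset.induction_on with
  | empty => simp
  | insert _ _ h ih => rw [Finset.sum_insert h, Finset.sum_insert h, ← ih]; rfl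

lemma circPow_eq_sum (B : LeftBrace A) (y : A) :
    ∀ m, B.circPow y m = (∑ j ∈ Finset.range m, (B.lam y) ^ j) y := by
  intro m
  induction m with
  | zero => simp [circPow]
  | succ m ih =>
    rw [circPow, circ_eq, ih, Finset.sum_range_succ']
    have h1 : ∀ j : ℕ, (B.lam y) ^ (j + 1) = B.lam y * (B.lam y) ^ j := fun j => pow_succ' _ _
    simp only [h1, pow_zero]
    rw [← Finset.mul_sum]
    have h2 : ((B.lam y * ∑ j ∈ Finset.range m, (B.lam y) ^ j) + 1) y
        = B.lam y ((∑ j ∈ Finset.range m, (B.lam y) ^ j) y) + y := by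
      rfl
    rw [h2]

lemma lam_circPow (B : LeftBrace A) (y : A) :
    ∀ m, B.lam (B.circPow y m) = (B.lam y) ^ m := by
  intro m
  induction m with
  | zero => rw [circPow, lam_zero, pow_zero]
  | succ m ih => rw [circPow, lam_mul, ih, pow_succ']

lemma lam_pow_fix (B : LeftBrace A) {p n : ℕ} (hp : p.Prime) (hpn : n + 1 < p)
    (htop : B.soc n = ⊤) (a v : A) (hv : p • v = 0) : ((B.lam a) ^ p) v = v := by
  have hrw : B.lam a = (B.lam a - 1) + 1 := (sub_add_cancel _ _).symm
  set ν : AddMonoid.End A := B.lam a - 1 with hν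
  rw [hrw, Commute.add_pow (Commute.one_right ν), end_sum_apply]
  rw [Finset.sum_eq_single_of_mem 0 (Finset.mem_range.2 (Nat.succ_pos p))]
  · simp [AddMonoid.End.natCast_apply]
  · intro b hb hb0
    rw [Finset.mem_range] at hb
    have happ : (ν ^ b * 1 ^ (p - b) * ((p.choose b : ℕ) : AddMonoid.End A)) v
        = (ν ^ b) ((p.choose b) • v) := by
      rw [one_pow, mul_one]
      rfl
    rw [happ]
    rcases eq_or_ne b p with rfl | hbp
    · rw [Nat.choose_self, one_smul]
      exact B.nu_pow_eq_zero htop a v (by omega)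
    · have hdvd : p ∣ p.choose b := hp.dvd_choose_self hb0 (by omega)
      obtain ⟨c, hc⟩ := hdvd
      rw [hc, mul_comm, mul_smul, hv, smul_zero, map_zero]

lemma circPow_prime (B : LeftBrace A) {p n : ℕ} (hp : p.Prime) (hpn : n + 1 < p)
    (htop : B.soc n = ⊤) (y : A) :
    ∃ u, B.circPow y p = p • (y + u) ∧ ∀ k, y ∈ B.soc (k + 1) → u ∈ B.soc k := by
  set ν : AddMonoid.End A := B.lam y - 1 with hν
  refine ⟨∑ i ∈ Finset.Ico 1 p, (p.choose (i + 1) / p) • (ν ^ i) y, ?_, ?_⟩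
  · have h1 : B.circPow y p = ∑ i ∈ Finset.range p, p.choose (i + 1) • (ν ^ i) y := by
      rw [circPow_eq_sum]
      have hgeom := geom_sum_choose (R := AddMonoid.End A) ν p p le_rfl
      have hν1 : ν + 1 = B.lam y := sub_add_cancel _ _
      rw [hν1] at hgeom
      rw [hgeom, end_sum_apply]
      apply Finset.sum_congr rfl
      intro i _
      show (((p.choose (i+1) : ℕ) : AddMonoid.End A) * ν ^ i) y = p.choose (i + 1) • (ν ^ i) y
      show ((p.choose (i+1) : ℕ) : AddMonoid.End A) ((ν ^ i) y) = p.choose (i + 1) • (ν ^ i) y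
      rw [AddMonoid.End.natCast_apply]
    have h2 : B.circPow y p
        = p.choose (0 + 1) • (ν ^ 0) y + ∑ i ∈ Finset.Ico 1 p, p.choose (i + 1) • (ν ^ i) y := by
      rw [h1, Finset.range_eq_Ico, Finset.sum_eq_sum_Ico_succ_bot hp.pos]
    have h3 : ∑ i ∈ Finset.Ico 1 p, p.choose (i + 1) • (ν ^ i) y
        = p • ∑ i ∈ Finset.Ico 1 p, (p.choose (i + 1) / p) • (ν ^ i) y := by
      rw [Finset.smul_sum]
      apply Finset.sum_congr rfl
      intro i hi
      rw [Finset.mem_Ico] at hi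
      rw [smul_smul]
      by_cases hip : i + 1 < p
      · rw [Nat.mul_div_cancel' (hp.dvd_choose_self (Nat.succ_ne_zero i) hip)]
      · have hni : n ≤ i := by omega
        rw [B.nu_pow_eq_zero htop y y hni, smul_zero, smul_zero]
    rw [h2, h3, smul_add]
    congr 1
    · show p.choose 1 • ((1 : AddMonoid.End A) y) = p • y
      rw [Nat.choose_one_right]
      rfl
  · intro k hy
    apply AddSubgroup.sum_mem
    intro i hi
    rw [Finset.mem_Ico] at hi
    apply AddSubgroup.nsmul_mem
    have h := B.nu_pow_mem y i (k + 1) y hy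
    exact B.soc_mono (by omega) h

lemma lam_psmul_fix (B : LeftBrace A) {p n : ℕ} (hp : p.Prime) (hpn : n + 1 < p)
    (htop : B.soc n = ⊤) :
    ∀ k, ∀ y ∈ B.soc k, ∀ v, p • v = 0 → B.lam (p • y) v = v := by
  intro k
  induction k with
  | zero =>
    intro y hy v hv
    rw [soc_zero, AddSubgroup.mem_bot] at hy
    rw [hy, smul_zero, lam_zero]
    rfl
  | succ k ih =>
    intro y hy v hv
    obtain ⟨u, hu1, hu2⟩ := B.circPow_prime hp hpn htop y
    have huk : u ∈ B.soc k := hu2 k hy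
    set z : A := -(B.lam (B.inv (B.circPow y p)) u) with hz
    have hzk : z ∈ B.soc k := neg_mem (B.lam_mem_soc _ huk)
    have hcw : B.circ (B.circPow y p) (p • z) = p • y := by
      rw [circ_eq]
      have hlz : B.lam (B.circPow y p) (p • z) = -(p • u) := by
        rw [map_nsmul, hz, map_neg, lam_lam_inv, smul_neg]
      rw [hlz, hu1, smul_add]
      abel
    have hsplit : B.lam (p • y) = B.lam (B.circPow y p) * B.lam (p • z) := by
      rw [← lam_mul, hcw]
    calc B.lam (p • y) v = B.lam (B.circPow y p) (B.lam (p • z) v) := by rw [hsplit]; rfl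
      _ = B.lam (B.circPow y p) v := by rw [ih z hzk v hv]
      _ = ((B.lam y) ^ p) v := by rw [lam_circPow]
      _ = v := B.lam_pow_fix hp hpn htop y v hv

end LeftBrace

/-- Let A be a brace of cardinality p^n, p > n + 1 prime. If p²(y - y') = 0 then
p((px) * y) = p((px) * y') for every x. -/
theorem stmt8 {A : Type*} [AddCommGroup A] [Fintype A] (B : LeftBrace A) (p n : ℕ)
    (hp : p.Prime) (hpn : n + 1 < p) (hcard : Fintype.card A = p ^ n)
    (y y' : A) (h : p ^ 2 • (y - y') = 0) (x : A) :
    p • B.star (p • x) y = p • B.star (p • x) y' := by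
  have hcard' : Nat.card A = p ^ n := by rw [Nat.card_eq_fintype_card, hcard]
  have htop : B.soc n = ⊤ := B.soc_top hp hcard'
  have hx : x ∈ B.soc n := htop ▸ AddSubgroup.mem_top x
  have hv : p • (p • (y - y')) = 0 := by
    rw [smul_smul, ← sq]
    exact h
  have hfix : B.lam (p • x) (p • (y - y')) = p • (y - y') :=
    B.lam_psmul_fix hp hpn htop n x hx _ hv
  have expand : ∀ b : A, p • B.star (p • x) b = B.lam (p • x) (p • b) - p • b := by
    intro b
    have hstar : B.star (p • x) b = B.lam (p • x) b - b := by
      rw [LeftBrace.star, LeftBrace.lam_apply]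
    rw [hstar]
    rw [smul_sub]
    rw [map_nsmul]
  rw [expand y, expand y']
  have h2 : B.lam (p • x) (p • y) - B.lam (p • x) (p • y') = p • y - p • y' := by
    rw [← map_sub, ← smul_sub, hfix]
  exact sub_eq_sub_iff_sub_eq_sub.mpr h2
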